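/- Let E be a real Banach space, let K be a compact Hausdorff topological space, and let T : E → C(K) be a bounded linear operator with ‖T‖ = 1. Then there exists a unique lattice homomorphism T̂ : C(B_{E*}) → C(K) such that T̂ ∘ φ_E = T and T̂(𝟙) = 𝟙. Moreover, ‖T̂‖ = ‖T‖ = 1 and T̂ is an algebra homomorphism. -/

import Mathlib

open Metric

/-- The closed unit ball of the dual of `E`, equipped with the relative weak* topology. -/
def dualBall (E : Type*) [NormedAddCommGroup E] [NormedSpace ℝ E] : Set (WeakDual ℝ E) :=
  { ψ : WeakDual ℝ E | ‖WeakDual.toStrongDual ψ‖ ≤ 1 }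

/-- Banach–Alaoglu: the dual ball is weak* compact. -/
instance dualBall.instCompactSpace (E : Type*) [NormedAddCommGroup E] [NormedSpace ℝ E] :
    CompactSpace (dualBall E) :=
  isCompact_iff_compactSpace.mp (by
    have h := WeakDual.isCompact_closedBall (𝕜 := ℝ) (E := E) 0 1
    convert h using 1
    ext ψ
    simp [dualBall, mem_closedBall_zero_iff])

/-- The canonical isometry `φ_E : E → C(B_{E*})`, `x ↦ δ_x`, where
`δ_x(x*) = x*(x)`. -/
noncomputable def deltaMap (E : Type*) [NormedAddCommGroup E] [NormedSpace ℝ E] (x : E) :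
    C(dualBall E, ℝ) :=
  ⟨fun ψ => (ψ : WeakDual ℝ E) x, (WeakDual.eval_continuous x).comp continuous_subtype_val⟩

set_option maxHeartbeats 1000000 in
/-- Let `E` be a real Banach space, `K` a compact Hausdorff space and
`T : E → C(K)` a bounded linear operator with `‖T‖ = 1`. Then there is a unique lattice
homomorphism `T̂ : C(B_{E*}) → C(K)` with `T̂ ∘ φ_E = T` and `T̂ 𝟙 = 𝟙`; moreover
`‖T̂‖ = ‖T‖ = 1` and `T̂` is an algebra homomorphism. -/
theorem free_unital_AM_space_universal_property
    (E K : Type*) [NormedAddCommGroup E] [NormedSpace ℝ E] [CompleteSpace E]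
    [TopologicalSpace K] [CompactSpace K] [T2Space K]
    (T : E →L[ℝ] C(K, ℝ)) (hT : ‖T‖ = 1) :
    ∃ That : C(dualBall E, ℝ) →L[ℝ] C(K, ℝ),
      (∀ f g : C(dualBall E, ℝ), That (f ⊔ g) = That f ⊔ That g) ∧
      (∀ x : E, That (deltaMap E x) = T x) ∧
      That 1 = 1 ∧
      ‖That‖ = 1 ∧
      (∀ f g : C(dualBall E, ℝ), That (f * g) = That f * That g) ∧
      (∀ S : C(dualBall E, ℝ) →ₗ[ℝ] C(K, ℝ),
        (∀ f g : C(dualBall E, ℝ), S (f ⊔ g) = S f ⊔ S g) →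
        (∀ x : E, S (deltaMap E x) = T x) → S 1 = 1 →
        ∀ f, S f = That f) := by
  -- K is nonempty since ‖T‖ = 1 ≠ 0.
  have hK : Nonempty K := by
    by_contra h
    have h0 : ∀ x : E, T x = 0 := fun x => by
      ext k; exact absurd ⟨k⟩ h
    have hle : ‖T‖ ≤ 0 := T.opNorm_le_bound le_rfl (fun x => by
      rw [h0]; simp)
    rw [hT] at hle
    linarith
  -- The map τ : K → dualBall E, τ k = (x ↦ T x k).
  have hbound : ∀ (k : K) (x : E), ‖T x k‖ ≤ 1 * ‖x‖ := by
    intro k x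
    calc ‖T x k‖ ≤ ‖T x‖ := ContinuousMap.norm_coe_le_norm (T x) k
    _ ≤ ‖T‖ * ‖x‖ := T.le_opNorm x
    _ = 1 * ‖x‖ := by rw [hT]
  let ψ : K → (E →L[ℝ] ℝ) := fun k =>
    LinearMap.mkContinuous
      { toFun := fun x => T x k
        map_add' := fun x y => by simp
        map_smul' := fun c x => by simp } 1 (hbound k)
  have hψmem : ∀ k, WeakDual.toStrongDual (ψ k : WeakDual ℝ E) ∈ dualBall E := by
    intro k
    simp only [dualBall, Set.mem_setOf_eq]
    exact ContinuousLinearMap.opNorm_le_bound _ zero_le_one (fun x => by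
      exact hbound k x)
  let τ : C(K, dualBall E) :=
    ⟨fun k => ⟨(ψ k : WeakDual ℝ E), hψmem k⟩, by
      apply Continuous.subtype_mk
      apply WeakDual.continuous_of_continuous_eval
      intro x
      exact (T x).continuous⟩
  -- The operator T̂ f = f ∘ τ.
  have hcompnorm : ∀ f : C(dualBall E, ℝ), ‖f.comp τ‖ ≤ 1 * ‖f‖ := by
    intro f
    rw [one_mul]
    exact (ContinuousMap.norm_le _ (norm_nonneg f)).mpr fun k =>
      ContinuousMap.norm_coe_le_norm f (τ k)
  let That : C(dualBall E, ℝ) →L[ℝ] C(K, ℝ) :=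
    LinearMap.mkContinuous
      { toFun := fun f => f.comp τ
        map_add' := fun f g => by ext k; simp
        map_smul' := fun c f => by ext k; simp } 1 hcompnorm
  have hThat_apply : ∀ (f : C(dualBall E, ℝ)) (k : K), That f k = f (τ k) := fun _ _ => rfl
  have hsup : ∀ f g : C(dualBall E, ℝ), That (f ⊔ g) = That f ⊔ That g := by
    intro f g; ext k
    simp [hThat_apply, ContinuousMap.sup_apply]
  have hdelta : ∀ x : E, That (deltaMap E x) = T x := by
    intro x; ext k; rfl
  have hone : That 1 = 1 := by ext k; rfl
  have hnorm : ‖That‖ = 1 := by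
    apply le_antisymm
    · exact LinearMap.mkContinuous_norm_le _ zero_le_one _
    · have h1 : ‖(1 : C(K, ℝ))‖ = 1 := by
        rw [ContinuousMap.norm_eq_iSup_norm]
        simp [ciSup_const]
      calc (1 : ℝ) = ‖That 1‖ := by rw [hone, h1]
      _ ≤ ‖That‖ * ‖(1 : C(dualBall E, ℝ))‖ := That.le_opNorm 1
      _ = ‖That‖ := by
          rw [ContinuousMap.norm_eq_iSup_norm]
          have : Nonempty (dualBall E) := ⟨⟨0, by simp [dualBall]⟩⟩
          simp [ciSup_const]
  have hmul : ∀ f g : C(dualBall E, ℝ), That (f * g) = That f * That g := by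
    intro f g; ext k; rfl
  refine ⟨That, hsup, hdelta, hone, hnorm, hmul, ?_⟩
  -- Uniqueness
  intro S hSsup hSdelta hSone f
  -- S is monotone, hence bounded with ‖S f‖ ≤ ‖f‖, hence continuous.
  have hSmono : ∀ g h : C(dualBall E, ℝ), g ≤ h → S g ≤ S h := by
    intro g h hgh
    have : g ⊔ h = h := sup_eq_right.mpr hgh
    have := hSsup g h
    rw [sup_eq_right.mpr hgh] at this
    rw [this]
    exact le_sup_left
  have hSbound : ∀ g : C(dualBall E, ℝ), ‖S g‖ ≤ 1 * ‖g‖ := by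
    intro g
    rw [one_mul]
    rw [ContinuousMap.norm_le _ (norm_nonneg g)]
    intro k
    rw [Real.norm_eq_abs, abs_le]
    have habs : ∀ ψ' : dualBall E, |g ψ'| ≤ ‖g‖ := fun ψ' => by
      have := ContinuousMap.norm_coe_le_norm g ψ'
      rwa [Real.norm_eq_abs] at this
    have hle : g ≤ ‖g‖ • (1 : C(dualBall E, ℝ)) := by
      rw [ContinuousMap.le_def]
      intro ψ'
      simp only [ContinuousMap.smul_apply, ContinuousMap.one_apply, smul_eq_mul, mul_one]
      linarith [le_abs_self (g ψ'), habs ψ']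
    have hge : -(‖g‖ • (1 : C(dualBall E, ℝ))) ≤ g := by
      rw [ContinuousMap.le_def]
      intro ψ'
      simp only [ContinuousMap.neg_apply, ContinuousMap.smul_apply,
        ContinuousMap.one_apply, smul_eq_mul, mul_one]
      linarith [neg_abs_le (g ψ'), habs ψ']
    constructor
    · have := hSmono _ _ hge
      rw [map_neg, map_smul, hSone] at this
      simpa using this k
    · have := hSmono _ _ hle
      rw [map_smul, hSone] at this
      simpa using this k
  let Sc : C(dualBall E, ℝ) →L[ℝ] C(K, ℝ) := LinearMap.mkContinuous S 1 hSbound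
  have hSc : ∀ g, Sc g = S g := fun _ => rfl
  -- The set where S and That agree.
  let L : Set C(dualBall E, ℝ) := {g | S g = That g}
  have hLclosed : IsClosed L :=
    isClosed_eq Sc.continuous That.continuous
  have hLone : (1 : C(dualBall E, ℝ)) ∈ L := by
    simp only [L, Set.mem_setOf_eq, hSone, hone]
  have hLdelta : ∀ x : E, deltaMap E x ∈ L := by
    intro x
    simp only [L, Set.mem_setOf_eq, hSdelta, hdelta]
  have hLadd : ∀ g ∈ L, ∀ h ∈ L, g + h ∈ L := by
    intro g hg h hh
    simp only [L, Set.mem_setOf_eq] at *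
    rw [map_add, map_add, hg, hh]
  have hLsmul : ∀ (c : ℝ), ∀ g ∈ L, c • g ∈ L := by
    intro c g hg
    simp only [L, Set.mem_setOf_eq] at *
    rw [map_smul, map_smul, hg]
  have hLsup : ∀ g ∈ L, ∀ h ∈ L, g ⊔ h ∈ L := by
    intro g hg h hh
    simp only [L, Set.mem_setOf_eq] at *
    rw [hSsup, hsup, hg, hh]
  have hLinf : ∀ g ∈ L, ∀ h ∈ L, g ⊓ h ∈ L := by
    intro g hg h hh
    have key : ∀ a b : C(dualBall E, ℝ), a ⊓ b = -((-a) ⊔ (-b)) := by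
      intro a b; rw [← neg_inf, neg_neg]
    rw [key]
    have := hLsup _ (hLsmul (-1) g hg) _ (hLsmul (-1) h hh)
    simp only [neg_one_smul] at this
    have := hLsmul (-1) _ this
    simpa using this
  -- L separates points strongly.
  have hsep : L.SeparatesPointsStrongly := by
    intro v x y
    by_cases hxy : x = y
    · refine ⟨v x • 1, hLsmul _ _ hLone, by simp, by simp [hxy]⟩
    · have hne : (x : WeakDual ℝ E) ≠ (y : WeakDual ℝ E) := fun h =>
        hxy (Subtype.ext h)
      obtain ⟨x₀, hx₀⟩ : ∃ x₀ : E, (x : WeakDual ℝ E) x₀ ≠ (y : WeakDual ℝ E) x₀ := by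
        by_contra h
        push_neg at h
        exact hne (ContinuousLinearMap.ext h)
      set g := deltaMap E x₀
      have hgxy : g x ≠ g y := hx₀
      set a := (v x - v y) / (g x - g y)
      refine ⟨a • g + (v x - a * g x) • 1, hLadd _ (hLsmul _ _ (hLdelta x₀)) _
        (hLsmul _ _ hLone), ?_, ?_⟩
      · simp only [ContinuousMap.add_apply, ContinuousMap.smul_apply,
          ContinuousMap.one_apply, smul_eq_mul, mul_one]
        ring
      · simp only [ContinuousMap.add_apply, ContinuousMap.smul_apply,
          ContinuousMap.one_apply, smul_eq_mul, mul_one]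
        have : a * (g x - g y) = v x - v y :=
          div_mul_cancel₀ _ (sub_ne_zero.mpr hgxy)
        linarith [this, mul_sub a (g x) (g y)]
  have hLtop : L = Set.univ := by
    have := ContinuousMap.sublattice_closure_eq_top L ⟨1, hLone⟩ hLinf hLsup hsep
    have h2 : closure L = L := hLclosed.closure_eq
    rw [h2] at this
    simpa using this
  have : f ∈ L := hLtop ▸ Set.mem_univ f
  exact this
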